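/- Let P be a partially ordered set equipped with a commutative flow T and let F : P → Set be a functor. For every q ∈ P the merging distance d_q^F is an extended pseudo-ultrametric on F(q): for all a, b, c ∈ F(q) one has d_q^F(a,a) = 0, d_q^F(a,b) = d_q^F(b,a), and d_q^F(a,c) ≤ max{ d_q^F(a,b), d_q^F(b,c) }. -/

import Mathlib

open scoped NNReal ENNReal

universe u v

/-- A commutative flow on a partially ordered set `P`. -/
structure CFlow (P : Type u) [PartialOrder P] where
  T : ℝ≥0 → P → P
  mono : ∀ ε : ℝ≥0, Monotone (T ε)
  T_zero : ∀ p : P, T 0 p = p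
  T_add : ∀ (ε δ : ℝ≥0) (p : P), T (ε + δ) p = T ε (T δ p)
  le_T : ∀ (ε : ℝ≥0) (p : P), p ≤ T ε p
  T_le_T : ∀ {ε δ : ℝ≥0} (p : P), ε ≤ δ → T ε p ≤ T δ p

/-- A functor `P → Set` for a poset `P`. -/
structure PosetFunctor (P : Type u) [PartialOrder P] where
  obj : P → Type v
  map : ∀ {p q : P}, p ≤ q → obj p → obj q
  map_id : ∀ (p : P) (a : obj p), map (le_refl p) a = a
  map_comp : ∀ {p q r : P} (h₁ : p ≤ q) (h₂ : q ≤ r) (a : obj p),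
      map h₂ (map h₁ a) = map (h₁.trans h₂) a

/-- The merging distance `d_q^F(a,b)`, valued in `[0,∞]`. -/
noncomputable def mergeDist {P : Type u} [PartialOrder P] (T : CFlow P)
    (F : PosetFunctor P) (q : P) (a b : F.obj q) : ℝ≥0∞ :=
  sInf {x : ℝ≥0∞ | ∃ ε : ℝ≥0, x = (ε : ℝ≥0∞) ∧
    F.map (T.le_T ε q) a = F.map (T.le_T ε q) b}

/-- The set `D_q^F` of reducing constants of `q` on `F`. -/
def reducingSet {P : Type u} [PartialOrder P] (T : CFlow P)
    (F : PosetFunctor P) (q : P) : Set ℝ≥0 :=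
  {δ | ∀ (γ₁ γ₂ : ℝ≥0) (h₁ : γ₁ < δ) (h₂ : δ ≤ γ₂),
    ¬ Function.Injective (F.map (T.T_le_T q (h₁.le.trans h₂)))}

/-- The left parallelogram loss `L_parL^{p,q}(φ)`. -/
noncomputable def LparL {P : Type u} [PartialOrder P] (T : CFlow P)
    (F G : PosetFunctor P) (η : ℝ≥0)
    (φ : ∀ p : P, F.obj p → G.obj (T.T η p)) {p q : P} (hpq : p ≤ q) : ℝ≥0∞ :=
  ⨆ a : F.obj p, mergeDist T G (T.T η q)
    (φ q (F.map hpq a)) (G.map (T.mono η hpq) (φ p a))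

/-- The right parallelogram loss `L_parR^{p,q}(ψ)`. -/
noncomputable def LparR {P : Type u} [PartialOrder P] (T : CFlow P)
    (F G : PosetFunctor P) (η : ℝ≥0)
    (ψ : ∀ p : P, G.obj p → F.obj (T.T η p)) {p q : P} (hpq : p ≤ q) : ℝ≥0∞ :=
  ⨆ b : G.obj p, mergeDist T F (T.T η q)
    (ψ q (G.map hpq b)) (F.map (T.mono η hpq) (ψ p b))

/-- The lower triangle loss `L_down^p(φ,ψ)`. -/
noncomputable def Ldown {P : Type u} [PartialOrder P] (T : CFlow P)
    (F G : PosetFunctor P) (η : ℝ≥0)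
    (φ : ∀ p : P, F.obj p → G.obj (T.T η p))
    (ψ : ∀ p : P, G.obj p → F.obj (T.T η p)) (p : P) : ℝ≥0∞ :=
  ⨆ a : F.obj p, mergeDist T F (T.T η (T.T η p))
    (ψ (T.T η p) (φ p a))
    (F.map ((T.le_T η p).trans (T.le_T η (T.T η p))) a)

/-- The upper triangle loss `L_up^p(φ,ψ)`. -/
noncomputable def Lup {P : Type u} [PartialOrder P] (T : CFlow P)
    (F G : PosetFunctor P) (η : ℝ≥0)
    (φ : ∀ p : P, F.obj p → G.obj (T.T η p))
    (ψ : ∀ p : P, G.obj p → F.obj (T.T η p)) (p : P) : ℝ≥0∞ :=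
  ⨆ b : G.obj p, mergeDist T G (T.T η (T.T η p))
    (φ (T.T η p) (ψ p b))
    (G.map ((T.le_T η p).trans (T.le_T η (T.T η p))) b)

/-- For every `q ∈ P`, the merging distance `d_q^F` is an extended pseudo-ultrametric
on `F(q)`: it is reflexive, symmetric, and satisfies the strong triangle inequality. -/

lemma mergeDist_mono_eq {P : Type u} [PartialOrder P] (T : CFlow P)
    (F : PosetFunctor P) (q : P) {a b : F.obj q} {ε δ : ℝ≥0} (h : ε ≤ δ)
    (heq : F.map (T.le_T ε q) a = F.map (T.le_T ε q) b) :
    F.map (T.le_T δ q) a = F.map (T.le_T δ q) b := by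
  have h2 : T.T ε q ≤ T.T δ q := T.T_le_T q h
  have ha := F.map_comp (T.le_T ε q) h2 a
  have hb := F.map_comp (T.le_T ε q) h2 b
  calc F.map (T.le_T δ q) a = F.map ((T.le_T ε q).trans h2) a := rfl
    _ = F.map h2 (F.map (T.le_T ε q) a) := ha.symm
    _ = F.map h2 (F.map (T.le_T ε q) b) := by rw [heq]
    _ = F.map ((T.le_T ε q).trans h2) b := hb
    _ = F.map (T.le_T δ q) b := rfl

theorem mergeDist_pseudo_ultrametric {P : Type u} [PartialOrder P]
    (T : CFlow P) (F : PosetFunctor P) (q : P) (a b c : F.obj q) :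
    mergeDist T F q a a = 0 ∧
    mergeDist T F q a b = mergeDist T F q b a ∧
    mergeDist T F q a c ≤ max (mergeDist T F q a b) (mergeDist T F q b c) := by
  refine ⟨?_, ?_, ?_⟩
  · have : (0 : ℝ≥0∞) ∈ {x : ℝ≥0∞ | ∃ ε : ℝ≥0, x = (ε : ℝ≥0∞) ∧
        F.map (T.le_T ε q) a = F.map (T.le_T ε q) a} := ⟨0, by simp, rfl⟩
    exact le_antisymm (sInf_le this) zero_le
  · unfold mergeDist
    congr 1
    ext x
    constructor
    · rintro ⟨ε, h1, h2⟩; exact ⟨ε, h1, h2.symm⟩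
    · rintro ⟨ε, h1, h2⟩; exact ⟨ε, h1, h2.symm⟩
  · by_contra hlt
    push_neg at hlt
    have hab : mergeDist T F q a b < mergeDist T F q a c :=
      lt_of_le_of_lt (le_max_left _ _) hlt
    have hbc : mergeDist T F q b c < mergeDist T F q a c :=
      lt_of_le_of_lt (le_max_right _ _) hlt
    obtain ⟨x, hxmem, hx⟩ := sInf_lt_iff.mp hab
    obtain ⟨y, hymem, hy⟩ := sInf_lt_iff.mp hbc
    obtain ⟨ε, rfl, hε⟩ := hxmem
    obtain ⟨δ, rfl, hδ⟩ := hymem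
    have hmem : ((max ε δ : ℝ≥0) : ℝ≥0∞) ∈ {x : ℝ≥0∞ | ∃ γ : ℝ≥0, x = (γ : ℝ≥0∞) ∧
        F.map (T.le_T γ q) a = F.map (T.le_T γ q) c} := by
      refine ⟨max ε δ, rfl, ?_⟩
      have h1 := mergeDist_mono_eq T F q (le_max_left ε δ) hε
      have h2 := mergeDist_mono_eq T F q (le_max_right ε δ) hδ
      exact h1.trans h2
    have : mergeDist T F q a c ≤ max (ε : ℝ≥0∞) (δ : ℝ≥0∞) := by
      have := sInf_le hmem
      simpa [mergeDist, ENNReal.coe_max] using this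
    exact absurd this (not_le.mpr (max_lt hx hy))
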